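/- If A is a unique factorization domain, then the polar group Π(A) is torsion free: if γ ∈ Π(A) satisfies γⁿ = 1 for some integer n ≥ 1, then γ = 1. -/

import Mathlib

set_option linter.unusedVariables false


/-- The subgroup `B* · K*` of `L* = Frac(B)*`, where `K = Frac(A)`. -/
noncomputable def polarN (B : Type) [CommRing B] [IsDomain B] (A : Subring B) :
    Subgroup (FractionRing B)ˣ :=
  Subgroup.closure {u : (FractionRing B)ˣ |
    (∃ b : Bˣ, (u : FractionRing B) = algebraMap B (FractionRing B) (b : B)) ∨
    (∃ a : A, (u : FractionRing B) = algebraMap B (FractionRing B) (a : B))}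

set_option linter.unusedSectionVars false

section Aux
variable {B : Type} [CommRing B] [IsDomain B] [Algebra ℂ B] {A : Subring B}

/-- uniqueness of coordinates -/
lemma uniqAB (hdecomp : ∀ b : B, ∃! p : ↥A × ↥A,
      b = (p.1 : B) + algebraMap ℂ B Complex.I * (p.2 : B))
    (z w z' w' : ↥A)
    (h : (z : B) + algebraMap ℂ B Complex.I * (w : B)
       = (z' : B) + algebraMap ℂ B Complex.I * (w' : B)) : z = z' ∧ w = w' := by
  obtain ⟨q, hq, huniq⟩ := hdecomp ((z : B) + algebraMap ℂ B Complex.I * (w : B))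
  have h1 := huniq (z, w) rfl
  have h2 := huniq (z', w') h
  have h3 : (z, w) = (z', w') := h1.trans h2.symm
  exact ⟨congrArg Prod.fst h3, congrArg Prod.snd h3⟩

lemma decAB (hdecomp : ∀ b : B, ∃! p : ↥A × ↥A,
      b = (p.1 : B) + algebraMap ℂ B Complex.I * (p.2 : B))
    (b : B) : ∃ z w : ↥A, b = (z : B) + algebraMap ℂ B Complex.I * (w : B) := by
  obtain ⟨⟨z, w⟩, hq, -⟩ := hdecomp b
  exact ⟨z, w, hq⟩

lemma I_sq : (algebraMap ℂ B Complex.I) * (algebraMap ℂ B Complex.I) = -1 := by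
  rw [← map_mul, Complex.I_mul_I, map_neg, map_one]

/-- B ∩ K = A -/
lemma bkAB (hdecomp : ∀ b : B, ∃! p : ↥A × ↥A,
      b = (p.1 : B) + algebraMap ℂ B Complex.I * (p.2 : B))
    (γ : B) (d e : ↥A) (hd : d ≠ 0) (h : γ * (d : B) = (e : B)) : ∃ a : ↥A, γ = (a : B) := by
  obtain ⟨z, w, hzw⟩ := decAB hdecomp γ
  have h' : ((z*d : ↥A) : B) + algebraMap ℂ B Complex.I * ((w*d : ↥A) : B)
      = ((e : ↥A) : B) + algebraMap ℂ B Complex.I * (((0:↥A) : B)) := by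
    push_cast
    rw [← h, hzw]; ring
  obtain ⟨-, hw⟩ := uniqAB hdecomp _ _ _ _ h'
  have hw0 : w = 0 := by
    rcases mul_eq_zero.mp hw with h | h
    · exact h
    · exact absurd h hd
  exact ⟨z, by rw [hzw, hw0]; push_cast; ring⟩

end Aux

section Aux2
variable {B : Type} [CommRing B] [IsDomain B] [Algebra ℂ B] {A : Subring B}

lemma twoUnit [Algebra ℝ B] (hRmem : ∀ r : ℝ, algebraMap ℝ B r ∈ A) : IsUnit (2 : ↥A) := by
  refine IsUnit.of_mul_eq_one (a := (2 : ↥A)) ⟨algebraMap ℝ B (1/2), hRmem _⟩ ?_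
  apply Subtype.ext
  push_cast
  have h2 : ((2:↥A) : B) = algebraMap ℝ B 2 := by rw [map_ofNat]; norm_cast
  rw [h2, ← map_mul]
  norm_num

lemma sqMem (hdecomp : ∀ b : B, ∃! p : ↥A × ↥A,
      b = (p.1 : B) + algebraMap ℂ B Complex.I * (p.2 : B))
    [Algebra ℝ B] (hRmem : ∀ r : ℝ, algebraMap ℝ B r ∈ A)
    {p : ↥A} (hp : Prime p) (γ : B)
    (h : γ * γ ∈ Ideal.span {(p : B)}) : γ ∈ Ideal.span {(p : B)} := by
  obtain ⟨z, w, hzw⟩ := decAB hdecomp γ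
  rw [Ideal.mem_span_singleton] at h ⊢
  obtain ⟨δ, hδ⟩ := h
  obtain ⟨d, e, hde⟩ := decAB hdecomp δ
  have hmain : ((z*z - w*w : ↥A) : B) + algebraMap ℂ B Complex.I * ((z*w+z*w : ↥A) : B)
      = ((p*d : ↥A):B) + algebraMap ℂ B Complex.I * ((p*e : ↥A):B) := by
    have h2 := hδ
    rw [hzw, hde] at h2
    push_cast
    linear_combination h2 - ((w:B)*(w:B)) * (I_sq (B:=B))
  obtain ⟨h1, h2⟩ := uniqAB hdecomp _ _ _ _ hmain
  have hdvd_zw : p ∣ z * w := by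
    have h2' : 2 * (z*w) = p * e := by linear_combination h2
    rcases hp.dvd_mul.mp ⟨e, h2'⟩ with h | h
    · exact absurd (isUnit_of_dvd_unit h (twoUnit hRmem)) hp.not_unit
    · exact h
  have key : ∃ t s : ↥A, z = p * t ∧ w = p * s := by
    rcases hp.dvd_mul.mp hdvd_zw with ⟨t, ht⟩ | ⟨s, hs⟩
    · have hw2 : p ∣ w * w := ⟨p*t*t - d, by linear_combination (z + p*t)*ht - h1⟩
      obtain ⟨s, hs⟩ : p ∣ w := (hp.dvd_mul.mp hw2).elim id id
      exact ⟨t, s, ht, hs⟩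
    · have hz2 : p ∣ z * z := ⟨d + p*s*s, by linear_combination h1 + (w + p*s)*hs⟩
      obtain ⟨t, ht⟩ : p ∣ z := (hp.dvd_mul.mp hz2).elim id id
      exact ⟨t, s, ht, hs⟩
  obtain ⟨t, s, ht, hs⟩ := key
  exact ⟨(t:B) + algebraMap ℂ B Complex.I * (s:B), by rw [hzw, ht, hs]; push_cast; ring⟩

lemma oneNotMem (hdecomp : ∀ b : B, ∃! p : ↥A × ↥A,
      b = (p.1 : B) + algebraMap ℂ B Complex.I * (p.2 : B))
    {p : ↥A} (hp : Prime p) : (1:B) ∉ Ideal.span {(p:B)} := by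
  intro h
  rw [Ideal.mem_span_singleton] at h
  obtain ⟨δ, hδ⟩ := h
  obtain ⟨a, ha⟩ := bkAB hdecomp δ p 1 hp.ne_zero
    (by rw [mul_comm, ← hδ]; push_cast; ring)
  have : p * a = 1 := by
    apply Subtype.ext
    push_cast
    rw [← ha, ← hδ]
  exact hp.not_isUnit (IsUnit.of_mul_eq_one _ this)

lemma powMem (hdecomp : ∀ b : B, ∃! p : ↥A × ↥A,
      b = (p.1 : B) + algebraMap ℂ B Complex.I * (p.2 : B))
    [Algebra ℝ B] (hRmem : ∀ r : ℝ, algebraMap ℝ B r ∈ A)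
    {p : ↥A} (hp : Prime p) :
    ∀ (N : ℕ) (γ : B), γ ^ N ∈ Ideal.span {(p:B)} → γ ∈ Ideal.span {(p:B)} := by
  intro N
  induction N using Nat.strong_induction_on with
  | _ N IH =>
    intro γ h
    match N, IH, h with
    | 0, IH, h => exact absurd (by simpa using h) (oneNotMem hdecomp hp)
    | 1, IH, h => simpa using h
    | (M+2), IH, h =>
      have h2 : (γ^(M+1)) * (γ^(M+1)) ∈ Ideal.span {(p:B)} := by
        have he : γ^(M+1) * γ^(M+1) = γ^(M+2) * γ^M := by ring
        rw [he]
        exact Ideal.mul_mem_right _ _ h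
      exact IH (M+1) (by omega) _ (sqMem hdecomp hRmem hp _ h2)

end Aux2

lemma keyLemma {B : Type} [CommRing B] [IsDomain B] [Algebra ℂ B] [Algebra ℝ B] {A : Subring B}
    [UniqueFactorizationMonoid ↥A]
    (hRmem : ∀ r : ℝ, algebraMap ℝ B r ∈ A)
    (hdecomp : ∀ b : B, ∃! p : ↥A × ↥A,
      b = (p.1 : B) + algebraMap ℂ B Complex.I * (p.2 : B))
    (n : ℕ) (hn : 1 ≤ n) :
    ∀ c : ↥A, c ≠ 0 → ∀ β : B, ∀ b : Bˣ, β ^ n = (b : B) * (c : B) →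
      ∃ (b' : Bˣ) (a : ↥A), β = (b' : B) * (a : B) := by
  refine fun c => wellFounded_dvdNotUnit.induction
    (C := fun c : ↥A => c ≠ 0 → ∀ β : B, ∀ b : Bˣ, β ^ n = (b : B) * (c : B) →
      ∃ (b' : Bˣ) (a : ↥A), β = (b' : B) * (a : B)) c ?_
  intro c IH hc0 β b hβ
  by_cases hcu : IsUnit c
  · have hu : IsUnit (β ^ n) := by
      rw [hβ]; exact (Units.isUnit b).mul (hcu.map A.subtype)
    have hβu : IsUnit β := (isUnit_pow_iff (Nat.one_le_iff_ne_zero.mp hn)).mp hu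
    exact ⟨hβu.unit, 1, by simp⟩
  · obtain ⟨pi, hirr, hdvd⟩ := WfDvdMonoid.exists_irreducible_factor hcu hc0
    have hp : Prime pi := UniqueFactorizationMonoid.irreducible_iff_prime.mp hirr
    by_cases hβP : β ∈ Ideal.span {(pi : B)}
    · obtain ⟨β₁, hβ₁⟩ := Ideal.mem_span_singleton.mp hβP
      have hpn0 : (pi^n : ↥A) ≠ 0 := pow_ne_zero _ hp.ne_zero
      have hbinv : ((b⁻¹:Bˣ):B) * (b:B) = 1 := Units.inv_mul b
      have hstep : ((b⁻¹ : Bˣ) : B) * β₁ ^ n * ((pi ^ n : ↥A) : B) = ((c : ↥A) : B) := by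
        have hpow : β ^ n = ((pi:↥A):B) ^ n * β₁ ^ n := by rw [hβ₁, mul_pow]
        push_cast
        rw [hβ] at hpow
        linear_combination -(((b⁻¹:Bˣ):B)) * hpow + ((c:↥A):B) * hbinv
      obtain ⟨c₁, hc₁⟩ := bkAB hdecomp _ _ _ hpn0 hstep
      have hc₁eq : c₁ * pi ^ n = c := by
        apply Subtype.ext
        push_cast
        rw [← hc₁]
        push_cast at hstep
        linear_combination hstep
      have hc₁0 : c₁ ≠ 0 := by
        intro h0
        rw [h0, zero_mul] at hc₁eq
        exact hc0 hc₁eq.symm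
      have hdnu : DvdNotUnit c₁ c := ⟨hc₁0, pi ^ n,
        fun h => hp.not_unit (isUnit_of_dvd_unit (dvd_pow_self pi (by omega)) h),
        hc₁eq.symm⟩
      have hβ₁n : β₁ ^ n = (b : B) * ((c₁:↥A) : B) := by
        rw [← hc₁, ← mul_assoc, Units.mul_inv, one_mul]
      obtain ⟨b', a, ha⟩ := IH c₁ hdnu hc₁0 β₁ b hβ₁n
      exact ⟨b', pi * a, by rw [hβ₁, ha]; push_cast; ring⟩
    · exfalso
      have hrad : β ∉ (Ideal.span {(pi:B)}).radical := by
        intro hr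
        obtain ⟨N, hN⟩ := Ideal.mem_radical_iff.mp hr
        exact hβP (powMem hdecomp hRmem hp N β hN)
      rw [Ideal.radical_eq_sInf, Ideal.mem_sInf] at hrad
      push_neg at hrad
      obtain ⟨Q, hQ, hβQ⟩ := hrad
      obtain ⟨hQle, hQpr⟩ := hQ
      have hcQ : ((c:↥A):B) ∈ Q := by
        obtain ⟨c₂, hc₂⟩ := hdvd
        have hco : ((c:↥A):B) = (pi:B) * ((c₂:↥A):B) := by rw [hc₂]; push_cast; ring
        rw [hco]
        exact Q.mul_mem_right _ (hQle (Ideal.mem_span_singleton_self _))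
      have hQn : β ^ n ∈ Q := by rw [hβ]; exact Q.mul_mem_left _ hcQ
      exact hβQ (hQpr.mem_of_pow_mem n hQn)

set_option maxHeartbeats 1000000 in
/-- Let `A` be a Noetherian integral `ℝ`-domain in which `ℝ` is
algebraically closed and `B = ℂ ⊗ℝ A` an integral domain (so `B = A ⊕ iA`).
If `A` is a UFD, then the polar group `Π(A) = L*/(B*·K*)` is torsion free:
if `γⁿ = 1` for some `n ≥ 1`, then `γ = 1`. -/
theorem polarGroup_torsionFree_of_UFD (B : Type) [CommRing B] [IsDomain B]
    [Algebra ℂ B] [Algebra ℝ B] [IsScalarTower ℝ ℂ B] (A : Subring B)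
    (hRmem : ∀ r : ℝ, algebraMap ℝ B r ∈ A)
    (hNoeth : IsNoetherianRing ↥A)
    (halgclosed : ∀ a ∈ A, IsAlgebraic ℝ a → ∃ r : ℝ, a = algebraMap ℝ B r)
    (hdecomp : ∀ b : B, ∃! p : ↥A × ↥A,
      b = (p.1 : B) + algebraMap ℂ B Complex.I * (p.2 : B))
    [UniqueFactorizationMonoid ↥A] :
    ∀ (γ : (FractionRing B)ˣ ⧸ polarN B A) (n : ℕ), 1 ≤ n → γ ^ n = 1 → γ = 1 := by
  classical
  intro γ n hn hγn
  obtain ⟨u, rfl⟩ := QuotientGroup.mk_surjective γ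
  have hinj : Function.Injective (algebraMap B (FractionRing B)) :=
    IsFractionRing.injective B (FractionRing B)
  have h' : (QuotientGroup.mk' (polarN B A)) (u ^ n) = 1 := by
    rw [map_pow]; exact hγn
  have hun : u ^ n ∈ polarN B A := (QuotientGroup.eq_one_iff _).mp h'
  -- helper : concrete form implies membership in polarN
  have memPolar : ∀ (w : (FractionRing B)ˣ) (bb : Bˣ) (aa cc : ↥A), cc ≠ 0 →
      (w : FractionRing B) * algebraMap B (FractionRing B) ((cc : ↥A) : B)
        = algebraMap B (FractionRing B) ((bb : Bˣ) : B)
          * algebraMap B (FractionRing B) ((aa : ↥A) : B) →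
      w ∈ polarN B A := by
    intro w bb aa cc hcc hw
    have hbb0 : algebraMap B (FractionRing B) ((bb : Bˣ) : B) ≠ 0 :=
      (map_ne_zero_iff _ hinj).mpr (Units.ne_zero bb)
    have hcc0 : algebraMap B (FractionRing B) ((cc : ↥A) : B) ≠ 0 := by
      refine (map_ne_zero_iff _ hinj).mpr ?_
      exact_mod_cast hcc
    have haa0 : algebraMap B (FractionRing B) ((aa : ↥A) : B) ≠ 0 := by
      intro h0
      rw [h0, mul_zero] at hw
      rcases mul_eq_zero.mp hw with h | h
      · exact Units.ne_zero w h
      · exact hcc0 h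
    have hwu : w = Units.mk0 _ hbb0 * Units.mk0 _ haa0 * (Units.mk0 _ hcc0)⁻¹ := by
      apply Units.ext
      rw [Units.val_mul, Units.val_mul, Units.val_inv_eq_inv_val]
      simp only [Units.val_mk0]
      rw [eq_mul_inv_iff_mul_eq₀ hcc0]
      exact hw
    have m1 : Units.mk0 _ hbb0 ∈ polarN B A := Subgroup.subset_closure (Or.inl ⟨bb, rfl⟩)
    have m2 : Units.mk0 _ haa0 ∈ polarN B A := Subgroup.subset_closure (Or.inr ⟨aa, rfl⟩)
    have m3 : Units.mk0 _ hcc0 ∈ polarN B A := Subgroup.subset_closure (Or.inr ⟨cc, rfl⟩)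
    rw [hwu]
    exact mul_mem (mul_mem m1 m2) (inv_mem m3)
  -- the subgroup `N'` of concrete products `b · a₁/a₂`
  let N' : Subgroup (FractionRing B)ˣ :=
    { carrier := {x | ∃ (bb : Bˣ) (a₁ a₂ : ↥A), a₂ ≠ 0 ∧
        (x : FractionRing B) * algebraMap B (FractionRing B) ((a₂ : ↥A) : B)
          = algebraMap B (FractionRing B) ((bb : Bˣ) : B)
            * algebraMap B (FractionRing B) ((a₁ : ↥A) : B)}
      one_mem' := ⟨1, 1, 1, one_ne_zero, by simp⟩
      mul_mem' := by
        rintro x y ⟨bb, a₁, a₂, h2, hx⟩ ⟨bb', a₁', a₂', h2', hy⟩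
        refine ⟨bb * bb', a₁ * a₁', a₂ * a₂', mul_ne_zero h2 h2', ?_⟩
        push_cast [Units.val_mul, map_mul]
        linear_combination ((y : FractionRing B)
            * algebraMap B (FractionRing B) ((a₂' : ↥A) : B)) * hx
          + (algebraMap B (FractionRing B) ((bb : Bˣ) : B)
            * algebraMap B (FractionRing B) ((a₁ : ↥A) : B)) * hy
      inv_mem' := by
        rintro x ⟨bb, a₁, a₂, h2, hx⟩
        have ha₁ : a₁ ≠ 0 := by
          intro h0
          rw [h0] at hx
          push_cast [map_zero, mul_zero] at hx
          rcases mul_eq_zero.mp hx with h | h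
          · exact Units.ne_zero x h
          · exact ((map_ne_zero_iff _ hinj).mpr (by exact_mod_cast h2)) h
        refine ⟨bb⁻¹, a₂, a₁, ha₁, ?_⟩
        have hxx : ((x⁻¹ : (FractionRing B)ˣ) : FractionRing B) * (x : FractionRing B) = 1 :=
          Units.inv_mul x
        have hbx : algebraMap B (FractionRing B) (((bb⁻¹ : Bˣ)) : B)
            * algebraMap B (FractionRing B) ((bb : Bˣ) : B) = 1 := by
          rw [← map_mul, Units.inv_mul, map_one]
        linear_combination (-(((x⁻¹ : (FractionRing B)ˣ) : FractionRing B))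
            * algebraMap B (FractionRing B) (((bb⁻¹ : Bˣ)) : B)) * hx
          + (algebraMap B (FractionRing B) (((bb⁻¹ : Bˣ)) : B)
            * algebraMap B (FractionRing B) ((a₂ : ↥A) : B)) * hxx
          + (-(((x⁻¹ : (FractionRing B)ˣ) : FractionRing B))
            * algebraMap B (FractionRing B) ((a₁ : ↥A) : B)) * hbx }
  have hle : polarN B A ≤ N' := by
    rw [polarN, Subgroup.closure_le]
    rintro x (⟨bb, hbb⟩ | ⟨aa, haa⟩)
    · exact ⟨bb, 1, 1, one_ne_zero, by rw [hbb]⟩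
    · exact ⟨1, aa, 1, one_ne_zero, by rw [haa]; simp [mul_comm]⟩
  obtain ⟨bb, a₁, a₂, ha₂, h1⟩ := hle hun
  rw [Units.val_pow_eq_pow_val] at h1
  -- write u as β₀ / a₀ with a₀ ∈ A
  obtain ⟨⟨β₁, δ⟩, hsur⟩ := IsLocalization.surj (nonZeroDivisors B) ((u : FractionRing B))
  have hδ0 : (δ : B) ≠ 0 := nonZeroDivisors.ne_zero δ.2
  obtain ⟨z, w, hzw⟩ := decAB hdecomp (δ : B)
  set a₀ : ↥A := z * z + w * w with ha₀def
  have hδδ' : (δ : B) * ((z : B) - algebraMap ℂ B Complex.I * (w : B)) = ((a₀ : ↥A) : B) := by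
    rw [hzw, ha₀def]
    push_cast
    linear_combination (-((w:B)*(w:B))) * (I_sq (B := B))
  have hδ'0 : (z : B) - algebraMap ℂ B Complex.I * (w : B) ≠ 0 := by
    intro h0
    have h0' : ((z : ↥A) : B) + algebraMap ℂ B Complex.I * (((-w) : ↥A) : B)
        = (((0:↥A)) : B) + algebraMap ℂ B Complex.I * (((0:↥A)) : B) := by
      push_cast
      linear_combination h0
    obtain ⟨hz0, hw0⟩ := uniqAB hdecomp _ _ _ _ h0'
    apply hδ0
    rw [hzw, hz0, neg_eq_zero.mp hw0]
    push_cast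
    ring
  have ha₀B : ((a₀ : ↥A) : B) ≠ 0 := by
    rw [← hδδ']
    exact mul_ne_zero hδ0 hδ'0
  have ha₀ : a₀ ≠ 0 := by exact_mod_cast ha₀B
  set β₀ : B := β₁ * ((z : B) - algebraMap ℂ B Complex.I * (w : B)) with hβ₀def
  have h0 : (u : FractionRing B) * algebraMap B (FractionRing B) ((a₀ : ↥A) : B)
      = algebraMap B (FractionRing B) β₀ := by
    rw [← hδδ', map_mul, ← mul_assoc, hsur, ← map_mul]
  have hpow : ((u : FractionRing B)) ^ n * (algebraMap B (FractionRing B) ((a₀ : ↥A) : B)) ^ n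
      = (algebraMap B (FractionRing B) β₀) ^ n := by
    rw [← mul_pow, h0]
  have hB : β₀ ^ n * ((a₂ : ↥A) : B) = ((bb : Bˣ) : B) * ((a₁ : ↥A) : B) * ((a₀ : ↥A) : B) ^ n := by
    apply hinj
    rw [map_mul, map_mul, map_mul, map_pow, map_pow]
    linear_combination (-(algebraMap B (FractionRing B) ((a₂ : ↥A) : B))) * hpow
      + (algebraMap B (FractionRing B) ((a₀ : ↥A) : B)) ^ n * h1
  have hbbinv : (((bb⁻¹ : Bˣ)) : B) * ((bb : Bˣ) : B) = 1 := Units.inv_mul bb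
  have hγceq : ((((bb⁻¹ : Bˣ)) : B) * β₀ ^ n) * ((a₂ : ↥A) : B)
      = (((a₁ * a₀ ^ n) : ↥A) : B) := by
    push_cast
    linear_combination (((bb⁻¹ : Bˣ)) : B) * hB
      + (((a₁ : ↥A) : B) * ((a₀ : ↥A) : B) ^ n) * hbbinv
  obtain ⟨c, hc⟩ := bkAB hdecomp _ _ _ ha₂ hγceq
  have hβc : β₀ ^ n = ((bb : Bˣ) : B) * ((c : ↥A) : B) := by
    rw [← hc, ← mul_assoc, Units.mul_inv, one_mul]
  have hβ₀0 : β₀ ≠ 0 := by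
    intro hb0
    have : algebraMap B (FractionRing B) β₀ ≠ 0 := by
      rw [← h0]
      exact mul_ne_zero (Units.ne_zero u) ((map_ne_zero_iff _ hinj).mpr ha₀B)
    rw [hb0, map_zero] at this
    exact this rfl
  have hc0 : c ≠ 0 := by
    intro h0
    apply pow_ne_zero n hβ₀0
    rw [hβc, h0]
    push_cast
    ring
  obtain ⟨b', a, hβ'⟩ := keyLemma hRmem hdecomp n hn c hc0 β₀ bb hβc
  have hfin : (u : FractionRing B) * algebraMap B (FractionRing B) ((a₀ : ↥A) : B)
      = algebraMap B (FractionRing B) ((b' : Bˣ) : B)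
        * algebraMap B (FractionRing B) ((a : ↥A) : B) := by
    rw [h0, hβ', map_mul]
  exact (QuotientGroup.eq_one_iff u).mpr (memPolar u b' a a₀ ha₀ hfin)
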